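/- arXiv:2507.11034 — 2 statements merged into one kernel-verified Lean document; each statement's English description precedes it below -/
import Mathlib

section
/- For all integers k ≥ 2 and n ≥ 9(k²+k+1)+6, one has ex(n,{kP₃, K₃}) = (k−1)(n−k+1). -/
open SimpleGraph

/-- `G` contains a (not necessarily induced) subgraph copy of `H`. -/
def GContains {V W : Type*} (G : SimpleGraph V) (H : SimpleGraph W) : Prop :=
  ∃ f : W ↪ V, ∀ a b, H.Adj a b → G.Adj (f a) (f b)

/-- The number of edges of a graph. -/
noncomputable def eCount {V : Type*} (G : SimpleGraph V) : ℕ := G.edgeSet.ncard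

/-- The Turán number of a "freeness" predicate `P` : the maximum number of edges of a
graph on `n` vertices satisfying `P`. -/
noncomputable def exNum (n : ℕ) (P : SimpleGraph (Fin n) → Prop) : ℕ :=
  sSup {m | ∃ G : SimpleGraph (Fin n), P G ∧ eCount G = m}

/-- The disjoint union of `k` copies of the path on `ℓ` vertices. -/
def kPaths (k ℓ : ℕ) : SimpleGraph (Fin k × Fin ℓ) where
  Adj x y := x.1 = y.1 ∧ ((x.2 : ℕ) + 1 = (y.2 : ℕ) ∨ (y.2 : ℕ) + 1 = (x.2 : ℕ))
  symm := ⟨fun x y h => ⟨h.1.symm, h.2.symm⟩⟩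
  loopless := ⟨fun x h => by obtain ⟨-, h⟩ := h; omega⟩

/-- The linear forest with one path on `len i` vertices for each `i ∈ s`. -/
def linearForest (s : Finset ℕ) (len : ℕ → ℕ) :
    SimpleGraph {p : ℕ × ℕ // p.1 ∈ s ∧ p.2 < len p.1} where
  Adj x y := x.val.1 = y.val.1 ∧ (x.val.2 + 1 = y.val.2 ∨ y.val.2 + 1 = x.val.2)
  symm := ⟨fun x y h => ⟨h.1.symm, h.2.symm⟩⟩
  loopless := ⟨fun x h => by obtain ⟨-, h⟩ := h; omega⟩

/-- The join `I_a + M_m` of an independent set of `a` vertices with a perfect matching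
on `2m` vertices (vertices `2t` and `2t+1` are matched). -/
def joinIM (a m : ℕ) : SimpleGraph (Fin a ⊕ Fin (2 * m)) where
  Adj x y :=
    match x, y with
    | Sum.inl _, Sum.inr _ => True
    | Sum.inr _, Sum.inl _ => True
    | Sum.inl _, Sum.inl _ => False
    | Sum.inr i, Sum.inr j => i ≠ j ∧ (i : ℕ) / 2 = (j : ℕ) / 2
  symm := by
    refine ⟨?_⟩
    rintro (x | x) (y | y) h
    · exact h.elim
    · trivial
    · trivial
    · exact ⟨h.1.symm, h.2.symm⟩
  loopless := by
    refine ⟨?_⟩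
    rintro (x | x) h
    · exact h
    · exact h.1 rfl

/-- `E'` is an edge control set of `F`: a set of edges of `F` such that every other edge of
`F` shares an endpoint with some edge of `E'`. -/
def IsEdgeControlSet {V : Type*} (F : SimpleGraph V) (E' : Finset (Sym2 V)) : Prop :=
  (E' : Set (Sym2 V)) ⊆ F.edgeSet ∧
    ∀ e ∈ F.edgeSet, e ∉ E' → ∃ e' ∈ E', ∃ v, v ∈ e ∧ v ∈ e'

/-- The edge control number `β₁(F)`: the minimum size of an edge control set of `F`. -/
noncomputable def edgeControlNumber {V : Type*} (F : SimpleGraph V) : ℕ :=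
  sInf {m | ∃ E' : Finset (Sym2 V), IsEdgeControlSet F E' ∧ E'.card = m}

/-- The number of triangles (copies of `K₃`) in `F`. -/
noncomputable def triCount {V : Type*} (F : SimpleGraph V) : ℕ :=
  {t : Finset V | F.IsNClique 3 t}.ncard

/-- `G` contains no member of the family `𝒢₁(F) = {F[V(F) ∖ S] : S ⊆ V(F), F[S] edgeless}`. -/
def G1FamFree {VF V : Type*} (F : SimpleGraph VF) (G : SimpleGraph V) : Prop :=
  ∀ S : Set VF, (∀ a ∈ S, ∀ b ∈ S, ¬ F.Adj a b) → ¬ GContains G (F.induce Sᶜ)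

/-- `G` contains no member of the family `𝒢₂(F) = {F[V(F) ∖ S] : S ⊆ V(F), e(F[S]) ≤ 1}`. -/
def G2FamFree {VF V : Type*} (F : SimpleGraph VF) (G : SimpleGraph V) : Prop :=
  ∀ S : Set VF, eCount (F.induce S) ≤ 1 → ¬ GContains G (F.induce Sᶜ)

/-- `G` contains no member of the family
`𝓗ᵢ(F) = {F[V(F) ∖ S] : S ⊆ V(F), Δ(F[S]) ≤ 1, e(F[S]) ≤ i}`. -/
def HiFamFree {VF V : Type*} (F : SimpleGraph VF) (i : ℕ) (G : SimpleGraph V) : Prop :=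
  ∀ S : Set VF, (∀ v ∈ S, (F.neighborSet v ∩ S).ncard ≤ 1) →
    eCount (F.induce S) ≤ i → ¬ GContains G (F.induce Sᶜ)

/-- `G` contains no member of the family `𝓗(F) = {F[V(F) ∖ S] : S ⊆ V(F), Δ(F[S]) ≤ 1}`. -/
def HFamFree {VF V : Type*} (F : SimpleGraph VF) (G : SimpleGraph V) : Prop :=
  ∀ S : Set VF, (∀ v ∈ S, (F.neighborSet v ∩ S).ncard ≤ 1) →
    ¬ GContains G (F.induce Sᶜ)

/-- The common neighborhood of `S` outside `S`. -/
def commonNbhd {V : Type*} (G : SimpleGraph V) (S : Set V) : Set V :=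
  {v | v ∉ S ∧ ∀ u ∈ S, G.Adj v u}

/-- The quantity `n_k = (n/3 − C(ℓ,2)) / ((⌈ℓ/2⌉+1)·C(ℓ,⌊ℓ/2⌋)) + kℓ`. -/
noncomputable def nkQ (n k ℓ : ℕ) : ℚ :=
  ((n : ℚ) / 3 - (ℓ.choose 2 : ℚ)) /
    ((((ℓ + 1) / 2 + 1 : ℕ) : ℚ) * (ℓ.choose (ℓ / 2) : ℚ)) + (k : ℚ) * (ℓ : ℚ)

/-- The set of vertices belonging to some `⌊ℓ/2⌋`-set whose common neighborhood outside it
has size at least `n_k`. -/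
def bigA (n k ℓ : ℕ) (G : SimpleGraph (Fin n)) : Set (Fin n) :=
  {v | ∃ S : Finset (Fin n), v ∈ S ∧ S.card = ℓ / 2 ∧
    nkQ n k ℓ ≤ ((commonNbhd G ↑S).ncard : ℚ)}


open Finset

set_option linter.unusedSectionVars false
set_option linter.unnecessarySimpa false

def Sys {V : Type*} (G : SimpleGraph V) (m : ℕ) (f : Fin m × Fin 3 → V) : Prop :=
  Function.Injective f ∧
    ∀ i : Fin m, G.Adj (f (i, 0)) (f (i, 1)) ∧ G.Adj (f (i, 1)) (f (i, 2))

lemma fin3_cases (j : Fin 3) : j = 0 ∨ j = 1 ∨ j = 2 := by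
  have h := j.isLt
  have : (j : ℕ) = 0 ∨ (j : ℕ) = 1 ∨ (j : ℕ) = 2 := by omega
  rcases this with h | h | h
  · exact Or.inl (Fin.ext h)
  · exact Or.inr (Or.inl (Fin.ext h))
  · exact Or.inr (Or.inr (Fin.ext h))

lemma sys_contains {V : Type*} {G : SimpleGraph V} {m : ℕ} {f : Fin m × Fin 3 → V}
    (h : Sys G m f) : GContains G (kPaths m 3) := by
  refine ⟨⟨f, h.1⟩, ?_⟩
  rintro ⟨i, j⟩ ⟨i', j'⟩ ⟨h1, h2⟩
  dsimp at h1 ⊢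
  subst h1
  rcases fin3_cases j with rfl | rfl | rfl <;> rcases fin3_cases j' with rfl | rfl | rfl <;>
    simp at h2 <;>
    first
      | exact (h.2 i).1
      | exact (h.2 i).2
      | exact ((h.2 i).1).symm
      | exact ((h.2 i).2).symm

lemma contains_sys {V : Type*} {G : SimpleGraph V} {m : ℕ}
    (h : GContains G (kPaths m 3)) : ∃ f : Fin m × Fin 3 → V, Sys G m f := by
  obtain ⟨f, hf⟩ := h
  refine ⟨f, f.injective, fun i => ⟨?_, ?_⟩⟩
  · exact hf (i, 0) (i, 1) ⟨rfl, Or.inl rfl⟩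
  · exact hf (i, 1) (i, 2) ⟨rfl, Or.inl rfl⟩

lemma sys_zero {V : Type*} (G : SimpleGraph V) : Sys G 0 (fun p => p.1.elim0) :=
  ⟨fun p => p.1.elim0, fun i => i.elim0⟩

lemma sys_extend {V : Type*} {G : SimpleGraph V} {m : ℕ} {f : Fin m × Fin 3 → V}
    (hs : Sys G m f) {a v b : V}
    (ha : ∀ p, f p ≠ a) (hv : ∀ p, f p ≠ v) (hb : ∀ p, f p ≠ b)
    (hab : a ≠ b) (hav : G.Adj a v) (hvb : G.Adj v b) :
    ∃ f' : Fin (m+1) × Fin 3 → V, Sys G (m+1) f' ∧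
      ∀ p, f' p = a ∨ f' p = v ∨ f' p = b ∨ ∃ q, f q = f' p := by
  classical
  have hva : v ≠ a := hav.ne'
  have hvb' : v ≠ b := hvb.ne
  refine ⟨fun p => if h : (p.1 : ℕ) < m then f (⟨p.1, h⟩, p.2) else ![a, v, b] p.2, ⟨?_, ?_⟩, ?_⟩
  · rintro ⟨i, j⟩ ⟨i', j'⟩ hEq
    dsimp at hEq
    by_cases h1 : (i : ℕ) < m <;> by_cases h2 : (i' : ℕ) < m
    · rw [dif_pos h1, dif_pos h2] at hEq
      have := hs.1 hEq
      have hi : (i : ℕ) = i' := congrArg (fun q : Fin m × Fin 3 => (q.1 : ℕ)) this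
      have hj : j = j' := congrArg Prod.snd this
      exact Prod.ext (Fin.ext hi) hj
    · rw [dif_pos h1, dif_neg h2] at hEq
      exfalso
      rcases fin3_cases j' with rfl | rfl | rfl <;> simp at hEq <;>
        [exact ha _ hEq; exact hv _ hEq; exact hb _ hEq]
    · rw [dif_neg h1, dif_pos h2] at hEq
      exfalso
      rcases fin3_cases j with rfl | rfl | rfl <;> simp at hEq <;>
        [exact ha _ hEq.symm; exact hv _ hEq.symm; exact hb _ hEq.symm]
    · rw [dif_neg h1, dif_neg h2] at hEq
      have hi : i = i' := by
        have := i.isLt; have := i'.isLt; exact Fin.ext (by omega)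
      have hj : j = j' := by
        rcases fin3_cases j with rfl | rfl | rfl <;> rcases fin3_cases j' with rfl | rfl | rfl <;>
          simp_all
      rw [hi, hj]
  · intro i
    by_cases h1 : (i : ℕ) < m
    · simpa [dif_pos h1] using hs.2 ⟨i, h1⟩
    · simp [dif_neg h1]
      exact ⟨hav, hvb⟩
  · rintro ⟨i, j⟩
    by_cases h1 : (i : ℕ) < m
    · exact Or.inr (Or.inr (Or.inr ⟨(⟨i, h1⟩, j), by simp [dif_pos h1]⟩))
    · rcases fin3_cases j with rfl | rfl | rfl <;> simp [dif_neg h1]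


section Counting
variable {V : Type*} [Fintype V] [DecidableEq V] (G : SimpleGraph V) [DecidableRel G.Adj]

def dA (A : Finset V) (v : V) : ℕ := (A.filter (G.Adj v)).card

lemma dA_mono {A B : Finset V} (h : A ⊆ B) (v : V) : dA G A v ≤ dA G B v :=
  Finset.card_le_card (Finset.filter_subset_filter _ h)

lemma DC (A B : Finset V) : ∑ v ∈ A, dA G B v = ∑ v ∈ B, dA G A v := by
  unfold dA
  simp only [Finset.card_filter]
  rw [Finset.sum_comm]
  congr 1; ext v; congr 1; ext u
  simp [G.adj_comm]

lemma dA_le_card (A : Finset V) (v : V) : dA G A v ≤ A.card :=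
  Finset.card_le_card (Finset.filter_subset _ _)

lemma dA_le_degree (A : Finset V) (v : V) : dA G A v ≤ G.degree v := by
  rw [degree, neighborFinset_eq_filter]
  exact Finset.card_le_card (by intro x hx; simp at hx ⊢; exact hx.2)

lemma deg_split (A : Finset V) (v : V) :
    G.degree v = dA G A v + dA G (univ \ A) v := by
  unfold dA
  have h : (univ.filter (G.Adj v)) = A.filter (G.Adj v) ∪ (univ \ A).filter (G.Adj v) := by
    rw [← Finset.filter_union, Finset.union_sdiff_of_subset (Finset.subset_univ A)]
  rw [degree, neighborFinset_eq_filter, h,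
    Finset.card_union_of_disjoint (Finset.disjoint_filter_filter Finset.disjoint_sdiff)]

lemma sum_deg_split (A : Finset V) :
    2 * G.edgeFinset.card =
      (∑ v ∈ A, dA G A v) + 2 * (∑ v ∈ A, dA G (univ \ A) v)
        + ∑ v ∈ univ \ A, dA G (univ \ A) v := by
  have h1 : ∑ v, G.degree v = 2 * G.edgeFinset.card := G.sum_degrees_eq_twice_card_edges
  have h2 : ∑ v ∈ univ \ A, G.degree v + ∑ v ∈ A, G.degree v = ∑ v, G.degree v :=
    Finset.sum_sdiff (Finset.subset_univ A)
  have h3 : ∀ v, G.degree v = dA G A v + dA G (univ \ A) v := deg_split G A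
  have h4 : ∑ v ∈ univ \ A, dA G A v = ∑ v ∈ A, dA G (univ \ A) v := DC G _ _
  calc 2 * G.edgeFinset.card = ∑ v, G.degree v := h1.symm
    _ = ∑ v ∈ univ \ A, G.degree v + ∑ v ∈ A, G.degree v := h2.symm
    _ = (∑ v ∈ univ \ A, (dA G A v + dA G (univ \ A) v))
          + ∑ v ∈ A, (dA G A v + dA G (univ \ A) v) := by
        simp only [← h3]
    _ = (∑ v ∈ univ \ A, dA G A v + ∑ v ∈ univ \ A, dA G (univ \ A) v)
          + (∑ v ∈ A, dA G A v + ∑ v ∈ A, dA G (univ \ A) v) := by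
        rw [Finset.sum_add_distrib, Finset.sum_add_distrib]
    _ = _ := by rw [h4]; ring


lemma miss (hTri : ∀ a b c, G.Adj a b → G.Adj b c → G.Adj a c → False)
    (U : Finset V) (v : V) (c : ℕ) (hc : ∀ u ∈ U, dA G U u ≤ c) :
    (∑ u ∈ U, dA G U u) + 2 * c * dA G U v ≤ 2 * c * U.card := by
  set X := U.filter (G.Adj v) with hX
  have hXU : X ⊆ U := Finset.filter_subset _ _
  have key : ∀ u ∈ X, dA G U u = dA G (U \ X) u := by
    intro u hu
    unfold dA
    congr 1
    ext w
    simp only [Finset.mem_filter, Finset.mem_sdiff]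
    constructor
    · rintro ⟨hwU, hadj⟩
      have hwU : w ∈ U := hwU
      refine ⟨⟨hwU, fun hwX => ?_⟩, hadj⟩
      rcases Finset.mem_filter.mp hwX with ⟨-, hvw⟩
      rcases Finset.mem_filter.mp hu with ⟨-, hvu⟩
      exact hTri u v w hvu.symm hvw hadj
    · rintro ⟨⟨hwU, -⟩, hadj⟩; exact ⟨hwU, hadj⟩
  have split : ∑ u ∈ U, dA G U u = ∑ u ∈ X, dA G U u + ∑ u ∈ U \ X, dA G U u := by
    rw [← Finset.sum_sdiff hXU]; ring
  have e1 : ∑ u ∈ X, dA G U u = ∑ u ∈ U \ X, dA G X u := by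
    rw [Finset.sum_congr rfl key, DC]
  have e2 : ∑ u ∈ U \ X, dA G X u ≤ ∑ u ∈ U \ X, dA G U u :=
    Finset.sum_le_sum fun u _ => dA_mono G hXU u
  have e3 : ∑ u ∈ U \ X, dA G U u ≤ c * (U \ X).card := by
    rw [mul_comm]
    exact Finset.sum_le_card_nsmul _ _ _ fun u hu => hc u (Finset.mem_sdiff.mp hu).1
  have e4 : (U \ X).card = U.card - X.card := Finset.card_sdiff_of_subset hXU
  have e5 : X.card ≤ U.card := Finset.card_le_card hXU
  have hdav : dA G U v = X.card := rfl
  calc (∑ u ∈ U, dA G U u) + 2 * c * dA G U v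
      ≤ (c * (U \ X).card + c * (U \ X).card) + 2 * c * X.card := by
        rw [split, e1, hdav]
        have := le_trans e2 e3
        omega
    _ ≤ 2 * c * U.card := by
        obtain ⟨q, hq⟩ := Nat.le.dest e5
        have e6 : (U \ X).card = q := by omega
        rw [e6, ← hq]
        exact le_of_eq (by ring)


instance instDecInduce (U : Finset V) : DecidableRel (G.induce (↑U : Set V)).Adj :=
  fun a b => inferInstanceAs (Decidable (G.Adj a.1 b.1))

lemma suu_eq_induce (U : Finset V) :
    ∑ u ∈ U, dA G U u = 2 * (G.induce (↑U : Set V)).edgeFinset.card := by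
  have hand := (G.induce (↑U : Set V)).sum_degrees_eq_twice_card_edges
  rw [← hand]
  rw [← Finset.sum_finset_coe (fun u => dA G U u) U]
  congr 1
  ext x
  unfold dA
  rw [degree, neighborFinset_eq_filter]
  refine (Finset.card_bij (fun (w : ↥(↑U : Set V)) _ => (w : V)) ?_ ?_ ?_).symm
  · intro w hw
    simp only [Finset.mem_filter, Finset.mem_univ, true_and] at hw ⊢
    exact ⟨w.2, hw⟩
  · intro w1 h1 w2 h2 h; exact Subtype.ext h
  · intro w hw
    simp only [Finset.mem_filter] at hw
    refine ⟨⟨w, hw.1⟩, ?_, rfl⟩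
    simp only [Finset.mem_filter, Finset.mem_univ, true_and, comap_adj,
      Function.Embedding.coe_subtype]
    exact hw.2

end Counting

section Greedy
variable {V : Type*} [Fintype V] [DecidableEq V] {G : SimpleGraph V} [DecidableRel G.Adj]

lemma greedy {k : ℕ} : ∀ (j : ℕ) (D₀ : Finset V), D₀.card = j →
    (∀ v ∈ D₀, 3 * k - 1 ≤ G.degree v) →
    ∀ (m : ℕ) (f : Fin m × Fin 3 → V), Sys G m f → (∀ p, f p ∉ D₀) → m + j ≤ k →
    GContains G (kPaths (m + j) 3) := by
  intro j
  induction j with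
  | zero =>
    intro D₀ _ _ m f hf _ _
    exact sys_contains hf
  | succ j ih =>
    intro D₀ hcard hdeg m f hf havoid hmj
    have hne : D₀.Nonempty := Finset.card_pos.mp (by omega)
    obtain ⟨v, hv⟩ := hne
    set D₁ := D₀.erase v with hD₁
    have hcard1 : D₁.card = j := by rw [hD₁, Finset.card_erase_of_mem hv]; omega
    set Timg := (Finset.univ : Finset (Fin m × Fin 3)).image f with hTimg
    have hTcard : Timg.card ≤ 3 * m := by
      calc Timg.card ≤ (Finset.univ : Finset (Fin m × Fin 3)).card := Finset.card_image_le
        _ = 3 * m := by simp [Fintype.card_prod, mul_comm]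
    set A := G.neighborFinset v \ (Timg ∪ D₁) with hA
    have hAcard : 2 ≤ A.card := by
      have h1 : (Timg ∪ D₁).card ≤ 3 * m + j := by
        calc (Timg ∪ D₁).card ≤ Timg.card + D₁.card := Finset.card_union_le _ _
          _ ≤ 3 * m + j := by omega
      have h2 : (G.neighborFinset v).card = G.degree v := rfl
      have h3 := hdeg v hv
      have h4 : (G.neighborFinset v).card - (Timg ∪ D₁).card ≤ A.card :=
        Finset.le_card_sdiff _ _
      omega
    obtain ⟨a, haA, b, hbA, hab⟩ := Finset.one_lt_card.mp (show 1 < A.card by omega)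
    have haN : G.Adj v a := (G.mem_neighborFinset v a).mp (Finset.mem_sdiff.mp haA).1
    have hbN : G.Adj v b := (G.mem_neighborFinset v b).mp (Finset.mem_sdiff.mp hbA).1
    have haT : a ∉ Timg ∪ D₁ := (Finset.mem_sdiff.mp haA).2
    have hbT : b ∉ Timg ∪ D₁ := (Finset.mem_sdiff.mp hbA).2
    have hfa : ∀ p, f p ≠ a := fun p hp =>
      haT (Finset.mem_union_left _ (Finset.mem_image.mpr ⟨p, Finset.mem_univ p, hp⟩))
    have hfb : ∀ p, f p ≠ b := fun p hp =>
      hbT (Finset.mem_union_left _ (Finset.mem_image.mpr ⟨p, Finset.mem_univ p, hp⟩))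
    have hfv : ∀ p, f p ≠ v := fun p hp => havoid p (hp ▸ hv)
    obtain ⟨f', hf', hnew⟩ := sys_extend hf hfa hfv hfb hab haN.symm hbN
    have havoid' : ∀ p, f' p ∉ D₁ := by
      intro p hp
      rcases hnew p with h | h | h | ⟨q, hq⟩
      · rw [h] at hp; exact haT (Finset.mem_union_right Timg hp)
      · rw [h] at hp; exact Finset.notMem_erase v D₀ hp
      · rw [h] at hp; exact hbT (Finset.mem_union_right Timg hp)
      · rw [← hq] at hp; exact havoid q (Finset.mem_of_mem_erase hp)
    have hdeg1 : ∀ w ∈ D₁, 3 * k - 1 ≤ G.degree w := fun w hw =>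
      hdeg w (Finset.mem_of_mem_erase hw)
    have := ih D₁ hcard1 hdeg1 (m + 1) f' hf' havoid' (by omega)
    have heq : m + 1 + j = m + (j + 1) := by omega
    rwa [heq] at this
end Greedy

lemma main_bound (k : ℕ) : 2 ≤ k → ∀ (V : Type) (_ : Fintype V) (_ : DecidableEq V)
    (G : SimpleGraph V) (_ : DecidableRel G.Adj),
    9 * (k ^ 2 + k + 1) + 6 ≤ Fintype.card V →
    (∀ a b c, G.Adj a b → G.Adj b c → G.Adj a c → False) →
    ¬ GContains G (kPaths k 3) →
    G.edgeFinset.card ≤ (k - 1) * (Fintype.card V - k + 1) := by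
  induction k using Nat.strong_induction_on with
  | _ k ih =>
  intro hk V instF instE G instD hn hTri hFree
  classical
  set n := Fintype.card V with hn'
  have hk2 : k ≤ k ^ 2 := Nat.le_self_pow two_ne_zero k
  have hkn : k ≤ n := by omega
  -- the high-degree vertices
  set D := univ.filter (fun v => 3 * k - 1 ≤ G.degree v) with hD
  have hdeg : ∀ v ∈ D, 3 * k - 1 ≤ G.degree v := fun v hv => (Finset.mem_filter.mp hv).2
  set d := D.card with hd
  have hdk : d ≤ k - 1 := by
    by_contra hcon
    push_neg at hcon
    obtain ⟨D₀, hD₀sub, hD₀card⟩ := Finset.exists_subset_card_eq (s := D) (n := k) (by omega)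
    have := greedy k D₀ hD₀card (fun v hv => hdeg v (hD₀sub hv)) 0 _ (sys_zero G)
      (fun p => p.1.elim0) (by omega)
    rw [Nat.zero_add] at this
    exact hFree this
  set U := univ \ D with hU
  have hUcard : U.card = n - d := by
    rw [hU, Finset.card_sdiff_of_subset (Finset.subset_univ D), Finset.card_univ]
  have hUdeg : ∀ u ∈ U, G.degree u ≤ 3 * k - 2 := by
    intro u hu
    have : u ∉ D := (Finset.mem_sdiff.mp hu).2
    rw [hD, Finset.mem_filter] at this
    push_neg at this
    have := this (Finset.mem_univ u)
    omega
  have hsplit := sum_deg_split G D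
  set SDD := ∑ v ∈ D, dA G D v with hSDD
  set SDU := ∑ v ∈ D, dA G U v with hSDU
  set SUU := ∑ u ∈ U, dA G U u with hSUU
  set E := G.edgeFinset.card with hE
  have h2e : 2 * E = SDD + 2 * SDU + SUU := hsplit
  set m := n - k + 1 with hm
  have hnm : n = m + k - 1 := by omega
  clear_value n d m E SDD SDU SUU
  suffices hfin : 2 * E ≤ 2 * ((k - 1) * m) by omega
  by_cases hd0 : d = 0
  · -- CASE C : no high-degree vertices; use a maximum system of disjoint paths
    have hDemp : D = ∅ := Finset.card_eq_zero.mp (by omega)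
    have halldeg : ∀ v : V, G.degree v ≤ 3 * k - 2 := by
      intro v
      refine hUdeg v ?_
      rw [hU, hDemp]
      simp
    set P : ℕ → Prop := fun t => ∃ f : Fin t × Fin 3 → V, Sys G t f with hP
    have hP0 : P 0 := ⟨_, sys_zero G⟩
    set t := Nat.findGreatest P (k - 1) with ht
    have hPt : P t := Nat.findGreatest_spec (Nat.zero_le _) hP0
    have htk : t ≤ k - 1 := Nat.findGreatest_le _
    obtain ⟨f, hf⟩ := hPt
    set T := (Finset.univ : Finset (Fin t × Fin 3)).image f with hT
    have hTcard : T.card = 3 * t := by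
      rw [hT, Finset.card_image_of_injective _ hf.1, Finset.card_univ]
      simp [mul_comm]
    set W := univ \ T with hW
    have hW1 : ∀ u ∈ W, dA G W u ≤ 1 := by
      intro u hu
      by_contra hcon
      push_neg at hcon
      have hcon' : 1 < (W.filter (G.Adj u)).card := hcon
      obtain ⟨a, haX, b, hbX, hab⟩ := Finset.one_lt_card.mp hcon'
      rw [Finset.mem_filter] at haX hbX
      obtain ⟨haW, hua⟩ := haX
      obtain ⟨hbW, hub⟩ := hbX
      have hfa : ∀ p, f p ≠ a := fun p hp =>
        (Finset.mem_sdiff.mp haW).2 (Finset.mem_image.mpr ⟨p, Finset.mem_univ p, hp⟩)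
      have hfb : ∀ p, f p ≠ b := fun p hp =>
        (Finset.mem_sdiff.mp hbW).2 (Finset.mem_image.mpr ⟨p, Finset.mem_univ p, hp⟩)
      have hfu : ∀ p, f p ≠ u := fun p hp =>
        (Finset.mem_sdiff.mp hu).2 (Finset.mem_image.mpr ⟨p, Finset.mem_univ p, hp⟩)
      obtain ⟨f', hf', -⟩ := sys_extend hf hfa hfu hfb hab hua.symm hub
      by_cases hcase : t + 1 ≤ k - 1
      · have := Nat.le_findGreatest hcase (show P (t+1) from ⟨f', hf'⟩)
        omega
      · have heq : t + 1 = k := by omega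
        have := sys_contains hf'
        rw [heq] at this
        exact hFree this
    -- counting
    have hsum1 : ∑ v ∈ T, G.degree v ≤ 3 * t * (3 * k - 2) := by
      have := Finset.sum_le_card_nsmul T (fun v => G.degree v) (3 * k - 2)
        (fun v _ => halldeg v)
      rwa [hTcard, smul_eq_mul] at this
    have hsum2 : ∑ v ∈ W, dA G T v ≤ 3 * t * (3 * k - 2) := by
      rw [hW, DC G]
      calc ∑ v ∈ T, dA G (univ \ T) v ≤ ∑ v ∈ T, G.degree v :=
            Finset.sum_le_sum (fun v _ => dA_le_degree G _ v)
        _ ≤ 3 * t * (3 * k - 2) := hsum1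
    have hsum3 : ∑ v ∈ W, dA G W v ≤ n := by
      calc ∑ v ∈ W, dA G W v ≤ ∑ v ∈ W, 1 := Finset.sum_le_sum hW1
        _ = W.card := by simp
        _ ≤ n := by have := Finset.card_le_univ W; omega
    have h2e' : 2 * E ≤ 3 * t * (3 * k - 2) + (3 * t * (3 * k - 2) + n) := by
      have := sum_deg_split G T
      rw [← hE] at this
      have hWsum : ∑ v ∈ univ \ T, dA G (univ \ T) v = ∑ v ∈ W, dA G W v := by rw [hW]
      have hTWsum : ∑ v ∈ T, dA G (univ \ T) v = ∑ v ∈ W, dA G T v := by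
        rw [hW, DC G]
      -- 2E = SDD_T + 2 * STW + SWW ≤ sum over T of degree + STW + SWW
      have hTT : (∑ v ∈ T, dA G T v) + (∑ v ∈ T, dA G (univ \ T) v) ≤
          3 * t * (3 * k - 2) := by
        calc (∑ v ∈ T, dA G T v) + (∑ v ∈ T, dA G (univ \ T) v)
            = ∑ v ∈ T, (dA G T v + dA G (univ \ T) v) := (Finset.sum_add_distrib).symm
          _ = ∑ v ∈ T, G.degree v := by
              exact Finset.sum_congr rfl (fun v _ => (deg_split G T v).symm)
          _ ≤ 3 * t * (3 * k - 2) := hsum1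
      have h1 := hsum2
      have h2 := hsum3
      rw [hTWsum, hWsum] at this
      omega
    -- arithmetic
    clear_value t
    obtain ⟨K, hK⟩ : ∃ K, k = K + 2 := ⟨k - 2, by omega⟩
    have e1 : 3 * k - 2 = 3 * K + 4 := by omega
    have e2 : k - 1 = K + 1 := by omega
    have e3 : t ≤ K + 1 := by omega
    have hQ : 3 * t * (3 * k - 2) ≤ 3 * (K + 1) * (3 * K + 4) := by
      rw [e1]
      exact Nat.mul_le_mul_right _ (by omega)
    have e5 : k ^ 2 = k * k := sq k
    have e7 : k * k = K * K + 4 * K + 4 := by rw [hK]; ring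
    have hm9 : 9 * (K * K) + 44 * K + 68 ≤ m := by omega
    have target_eq : (k - 1) * m = K * m + m := by rw [e2]; ring
    have expand1 : 3 * (K + 1) * (3 * K + 4) = 9 * (K * K) + 21 * K + 12 := by ring
    rw [target_eq]
    rcases Nat.eq_zero_or_pos K with hK0 | hKpos
    · subst hK0
      omega
    · have hmKm : m ≤ K * m := Nat.le_mul_of_pos_left m hKpos
      omega
  · -- d ≥ 1
    have hd1 : 1 ≤ d := by omega
    have hDcard : D.card = d := hd.symm
    by_cases hdk1 : d = k - 1
    · -- CASE A
      have hA1 : ∀ u ∈ U, dA G U u ≤ 1 := by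
        intro u hu
        by_contra hcon
        push_neg at hcon
        have hcon' : 1 < (U.filter (G.Adj u)).card := hcon
        obtain ⟨a, haX, b, hbX, hab⟩ := Finset.one_lt_card.mp hcon'
        rw [Finset.mem_filter] at haX hbX
        obtain ⟨haU, hua⟩ := haX
        obtain ⟨hbU, hub⟩ := hbX
        obtain ⟨f', hf', hnew⟩ := sys_extend (sys_zero G) (fun p => p.1.elim0)
          (fun p => p.1.elim0) (fun p => p.1.elim0) hab hua.symm hub
        have havoid : ∀ p, f' p ∉ D := by
          intro p hp
          rcases hnew p with h | h | h | ⟨q, _⟩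
          · rw [h] at hp; exact (Finset.mem_sdiff.mp haU).2 hp
          · rw [h] at hp; exact (Finset.mem_sdiff.mp hu).2 hp
          · rw [h] at hp; exact (Finset.mem_sdiff.mp hbU).2 hp
          · exact q.1.elim0
        have := greedy d D hDcard hdeg 1 f' hf' havoid (by omega)
        have heq : 1 + d = k := by omega
        rw [heq] at this
        exact hFree this
      have hSUU1 : SUU ≤ U.card := by
        rw [hSUU]
        calc ∑ u ∈ U, dA G U u ≤ ∑ u ∈ U, 1 := Finset.sum_le_sum hA1
          _ = U.card := by simp
      have hUm : U.card = m := by omega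
      have hsumD : d * SUU + 2 * SDU ≤ 2 * (d * U.card) := by
        have h1 : ∀ v ∈ D, SUU + 2 * 1 * dA G U v ≤ 2 * 1 * U.card := fun v hv => by
          rw [hSUU]; exact miss G hTri U v 1 hA1
        have h2 := Finset.sum_le_sum h1
        rw [Finset.sum_add_distrib, Finset.sum_const, ← Finset.mul_sum, Finset.sum_const] at h2
        rw [hDcard, smul_eq_mul, smul_eq_mul, ← hSDU] at h2
        calc d * SUU + 2 * SDU = d * SUU + 2 * 1 * SDU := by ring
          _ ≤ d * (2 * 1 * U.card) := h2
          _ = 2 * (d * U.card) := by ring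
      by_cases hDD : SDD = 0
      · -- A1 : no edges inside D
        have hle : SUU ≤ d * SUU := Nat.le_mul_of_pos_left _ (by omega)
        have hdm : d * U.card = d * m := by rw [hUm]
        have hgoal : (k - 1) * m = d * m := by rw [hdk1]
        rw [hgoal]
        omega
      · -- A2 : an edge inside D
        obtain ⟨v, hvD, hvpos⟩ : ∃ v ∈ D, 0 < dA G D v := by
          by_contra hall
          push_neg at hall
          have : SDD = 0 := by
            rw [hSDD]
            exact Finset.sum_eq_zero (fun v hv => by have := hall v hv; omega)
          exact hDD this
        have : (D.filter (G.Adj v)).Nonempty := Finset.card_pos.mp hvpos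
        obtain ⟨w, hw⟩ := this
        rw [Finset.mem_filter] at hw
        obtain ⟨hwD, hvw⟩ := hw
        have hDU1 : ∀ u ∈ U, dA G D u ≤ d - 1 := by
          intro u hu
          by_cases hv' : G.Adj u v
          · have hw' : ¬ G.Adj u w := fun h => hTri u v w hv' hvw h
            have hsub : D.filter (G.Adj u) ⊆ D.erase w := by
              intro x hx
              rw [Finset.mem_filter] at hx
              rw [Finset.mem_erase]
              exact ⟨fun hxw => hw' (hxw ▸ hx.2), hx.1⟩
            calc dA G D u ≤ (D.erase w).card := Finset.card_le_card hsub
              _ = d - 1 := by rw [Finset.card_erase_of_mem hwD, hDcard]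
          · have hsub : D.filter (G.Adj u) ⊆ D.erase v := by
              intro x hx
              rw [Finset.mem_filter] at hx
              rw [Finset.mem_erase]
              exact ⟨fun hxv => hv' (hxv ▸ hx.2), hx.1⟩
            calc dA G D u ≤ (D.erase v).card := Finset.card_le_card hsub
              _ = d - 1 := by rw [Finset.card_erase_of_mem hvD, hDcard]
        have hSDU_le : SDU ≤ (d - 1) * U.card := by
          rw [hSDU, DC G D U]
          have := Finset.sum_le_card_nsmul U (fun u => dA G D u) (d - 1) hDU1
          rwa [smul_eq_mul, mul_comm (U.card)] at this
        have hSDD_le : SDD ≤ d * d := by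
          rw [hSDD]
          have := Finset.sum_le_card_nsmul D (fun v => dA G D v) d
            (fun v _ => le_trans (dA_le_card G D v) hDcard.le)
          rwa [hDcard, smul_eq_mul] at this
        obtain ⟨K, hK⟩ : ∃ K, k = K + 2 := ⟨k - 2, by omega⟩
        have hdK : d = K + 1 := by omega
        have e5 : k ^ 2 = k * k := sq k
        have e7 : k * k = K * K + 4 * K + 4 := by rw [hK]; ring
        have hm9 : 9 * (K * K) + 44 * K + 68 ≤ m := by omega
        have edd : d * d = K * K + 2 * K + 1 := by rw [hdK]; ring
        have egoal : (k - 1) * m = K * m + m := by rw [show k - 1 = K + 1 by omega]; ring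
        have eSDU : (d - 1) * U.card = K * m := by
          rw [show d - 1 = K by omega, hUm]
        rw [egoal]
        omega
    · -- CASE B : 1 ≤ d ≤ k - 2
      have hdk2 : d ≤ k - 2 := by omega
      obtain ⟨r, hrk, hr1⟩ : ∃ r, k = d + r + 1 ∧ 1 ≤ r := ⟨k - d - 1, by omega, by omega⟩
      -- transfer freeness to the induced graph on U
      have hHfree : ¬ GContains (G.induce (↑U : Set V)) (kPaths (r + 1) 3) := by
        intro hc
        obtain ⟨g, hg⟩ := contains_sys hc
        have hgV : Sys G (r + 1) (fun p => (g p : V)) := by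
          refine ⟨fun p q h => hg.1 (Subtype.ext h), fun i => ⟨(hg.2 i).1, (hg.2 i).2⟩⟩
        have havoid : ∀ p : Fin (r + 1) × Fin 3, (g p : V) ∉ D := by
          intro p hp
          have hmem : (g p : V) ∈ U := by
            have := (g p).2
            simpa using this
          exact (Finset.mem_sdiff.mp hmem).2 hp
        have := greedy d D hDcard hdeg (r + 1) _ hgV havoid (by omega)
        have heq : r + 1 + d = k := by omega
        rw [heq] at this
        exact hFree this
      have hHtri : ∀ a b c : ↥(↑U : Set V), (G.induce (↑U : Set V)).Adj a b →
          (G.induce (↑U : Set V)).Adj b c → (G.induce (↑U : Set V)).Adj a c → False :=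
        fun a b c h1 h2 h3 => hTri a b c h1 h2 h3
      have hHcard : Fintype.card ↥(↑U : Set V) = U.card := by simp
      have e5 : k ^ 2 = k * k := sq k
      have ekk : k * k = d * d + r * r + 2 * (d * r) + 2 * d + 2 * r + 1 := by
        rw [hrk]; ring
      have er2 : (r + 1) ^ 2 = r * r + 2 * r + 1 := by ring
      have hUcard2 : 9 * ((r + 1) ^ 2 + (r + 1) + 1) + 6 ≤ Fintype.card ↥(↑U : Set V) := by
        rw [hHcard]
        have hdd : d ≤ d * d := Nat.le_mul_of_pos_left _ (by omega)
        have hdr : d ≤ 2 * (d * r) := by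
          have : d * 1 ≤ d * r := Nat.mul_le_mul_left d hr1
          omega
        omega
      have hIH := ih (r + 1) (by omega) (by omega) ↥(↑U : Set V) inferInstance inferInstance
        (G.induce (↑U : Set V)) (instDecInduce G U) hUcard2 hHtri hHfree
      have hSUU2 : SUU ≤ 2 * (r * m) := by
        rw [hSUU, suu_eq_induce G U]
        have hcard_eq : Fintype.card ↥(↑U : Set V) - (r + 1) + 1 = m := by
          rw [hHcard]; omega
        rw [hcard_eq] at hIH
        have : (r + 1 - 1) = r := by omega
        rw [this] at hIH
        omega
      -- the miss bound with c = 3k - 2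
      obtain ⟨c, hc4, hc3k⟩ : ∃ c, c = 3 * k - 2 ∧ c + 2 = 3 * k := ⟨3 * k - 2, rfl, by omega⟩
      have hUc : ∀ u ∈ U, dA G U u ≤ c := fun u hu => by
        have h1 := dA_le_degree G U u
        have h2 := hUdeg u hu
        omega
      have hsumD : d * SUU + 2 * c * SDU ≤ 2 * c * (d * U.card) := by
        have h1 : ∀ v ∈ D, SUU + 2 * c * dA G U v ≤ 2 * c * U.card := fun v hv => by
          rw [hSUU]; exact miss G hTri U v c hUc
        have h2 := Finset.sum_le_sum h1
        rw [Finset.sum_add_distrib, Finset.sum_const, ← Finset.mul_sum, Finset.sum_const] at h2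
        rw [hDcard, smul_eq_mul, smul_eq_mul, ← hSDU] at h2
        calc d * SUU + 2 * c * SDU ≤ d * (2 * c * U.card) := h2
          _ = 2 * c * (d * U.card) := by ring
      have hUcm : U.card = m + r := by omega
      have hdU : d * U.card = d * m + d * r := by rw [hUcm]; ring
      have hgoal : (k - 1) * m = d * m + r * m := by
        rw [show k - 1 = d + r by omega]; ring
      rw [hgoal]
      by_cases hB : c * SDD + c * (2 * (d * r)) ≤ d * SUU
      · -- B1
        have h2ec : c * (2 * E) = c * SDD + 2 * c * SDU + c * SUU := by rw [h2e]; ring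
        have key : c * (2 * E + 2 * (d * r)) ≤ c * (2 * (d * U.card) + SUU) := by
          have expand : c * (2 * E + 2 * (d * r)) =
              (c * SDD + c * (2 * (d * r))) + 2 * c * SDU + c * SUU := by
            calc c * (2 * E + 2 * (d * r)) = c * (2 * E) + c * (2 * (d * r)) := by ring
              _ = (c * SDD + c * (2 * (d * r))) + 2 * c * SDU + c * SUU := by
                  rw [h2ec]; ring
          rw [expand]
          have step1 : (c * SDD + c * (2 * (d * r))) + 2 * c * SDU + c * SUU ≤
              d * SUU + 2 * c * SDU + c * SUU := by
            have := hB; omega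
          refine le_trans step1 ?_
          have step2 : d * SUU + 2 * c * SDU ≤ 2 * c * (d * U.card) := by
            have := hsumD; omega
          have expand2 : c * (2 * (d * U.card) + SUU) = 2 * c * (d * U.card) + c * SUU := by
            ring
          omega
        have key2 : 2 * E + 2 * (d * r) ≤ 2 * (d * U.card) + SUU := by
          have hcpos : 0 < c := by omega
          exact Nat.le_of_mul_le_mul_left key hcpos
        omega
      · -- B2
        push_neg at hB
        have hSDD_le : SDD ≤ d * d := by
          rw [hSDD]
          have := Finset.sum_le_card_nsmul D (fun v => dA G D v) d
            (fun v _ => le_trans (dA_le_card G D v) hDcard.le)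
          rwa [hDcard, smul_eq_mul] at this
        have hSUUc : SUU ≤ c * d + 2 * (c * r) := by
          have h1 : c * SDD ≤ c * (d * d) := Nat.mul_le_mul_left c hSDD_le
          have h2 : d * SUU ≤ d * (c * d + 2 * (c * r)) := by
            have expand : c * (d * d) + c * (2 * (d * r)) = d * (c * d + 2 * (c * r)) := by
              ring
            omega
          exact Nat.le_of_mul_le_mul_left h2 (show 0 < d by omega)
        have hSDU_le : SDU ≤ d * U.card := by
          rw [hSDU]
          have := Finset.sum_le_card_nsmul D (fun v => dA G U v) (U.card)
            (fun v _ => dA_le_card G U v)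
          rwa [hDcard, smul_eq_mul] at this
        -- crude size bounds
        have hdk' : d ≤ k := by omega
        have hrk' : r ≤ k := by omega
        have hddk : d * d ≤ k * k := Nat.mul_le_mul hdk' hdk'
        have hdrk : d * r ≤ k * k := Nat.mul_le_mul hdk' hrk'
        have hcdk : c * d ≤ 3 * (k * k) := by
          calc c * d ≤ (3 * k) * k := Nat.mul_le_mul (by omega) hdk'
            _ = 3 * (k * k) := by ring
        have hcrk : c * r ≤ 3 * (k * k) := by
          calc c * r ≤ (3 * k) * k := Nat.mul_le_mul (by omega) hrk'
            _ = 3 * (k * k) := by ring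
        have hm6 : 6 * (k * k) ≤ m := by omega
        have hrm : m ≤ r * m := Nat.le_mul_of_pos_left _ (by omega)
        omega


def bip (n j : ℕ) : SimpleGraph (Fin n) where
  Adj x y := ((x : ℕ) < j ∧ ¬ ((y : ℕ) < j)) ∨ (((y : ℕ) < j) ∧ ¬ ((x : ℕ) < j))
  symm := ⟨fun x y h => by tauto⟩
  loopless := ⟨fun x h => by tauto⟩

instance bipDec (n j : ℕ) : DecidableRel (bip n j).Adj := fun x y =>
  inferInstanceAs (Decidable (((x : ℕ) < j ∧ ¬ ((y : ℕ) < j)) ∨ (((y : ℕ) < j) ∧ ¬ ((x : ℕ) < j))))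

lemma bip_tri_free (n j : ℕ) : ∀ a b c : Fin n,
    (bip n j).Adj a b → (bip n j).Adj b c → (bip n j).Adj a c → False := by
  intro a b c h1 h2 h3
  rcases h1 with ⟨h1a, h1b⟩ | ⟨h1a, h1b⟩ <;> rcases h2 with ⟨h2a, h2b⟩ | ⟨h2a, h2b⟩ <;>
    rcases h3 with ⟨h3a, h3b⟩ | ⟨h3a, h3b⟩ <;> omega

lemma bip_free (n k : ℕ) (hk : 1 ≤ k) (hkn : k ≤ n) :
    ¬ GContains (bip n (k - 1)) (kPaths k 3) := by
  rintro ⟨f, hf⟩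
  set j := k - 1 with hj
  have hadj : ∀ i : Fin k, (bip n j).Adj (f (i, 0)) (f (i, 1)) :=
    fun i => hf (i, 0) (i, 1) ⟨rfl, Or.inl rfl⟩
  set g : Fin k → Fin n := fun i =>
    if (f (i, 0) : ℕ) < j then f (i, 0) else f (i, 1) with hg
  have hg_small : ∀ i, (g i : ℕ) < j := by
    intro i
    rw [hg]
    dsimp only
    split_ifs with h1
    · exact h1
    · rcases hadj i with ⟨ha, hb⟩ | ⟨ha, hb⟩
      · exact absurd ha h1
      · exact ha
  have hg_inj : Function.Injective g := by
    intro i i' h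
    rw [hg] at h
    dsimp only at h
    split_ifs at h <;>
      exact congrArg Prod.fst (f.injective h)
  -- cardinality contradiction
  have hjn : j < n := by omega
  have hA : (univ.filter (fun v : Fin n => (v : ℕ) < j)).card = j := by
    have : univ.filter (fun v : Fin n => (v : ℕ) < j) = Finset.Iio (⟨j, hjn⟩ : Fin n) := by
      ext v
      simp [Finset.mem_Iio, Fin.lt_def]
    rw [this, Fin.card_Iio]
  have hle : Fintype.card (Fin k) ≤ (univ.filter (fun v : Fin n => (v : ℕ) < j)).card := by
    rw [← Finset.card_univ]
    exact Finset.card_le_card_of_injOn g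
      (fun i _ => Finset.mem_filter.mpr ⟨Finset.mem_univ _, hg_small i⟩)
      (hg_inj.injOn)
  rw [Fintype.card_fin, hA] at hle
  omega



lemma not_top_of_tri {V : Type*} {G : SimpleGraph V}
    (h : ∀ a b c, G.Adj a b → G.Adj b c → G.Adj a c → False) :
    ¬ GContains G (⊤ : SimpleGraph (Fin 3)) := by
  rintro ⟨f, hf⟩
  exact h (f 0) (f 1) (f 2)
    (hf 0 1 (by simp)) (hf 1 2 (by simp [Fin.ext_iff])) (hf 0 2 (by simp [Fin.ext_iff]))

lemma tri_of_not_top {V : Type*} {G : SimpleGraph V}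
    (h : ¬ GContains G (⊤ : SimpleGraph (Fin 3))) :
    ∀ a b c, G.Adj a b → G.Adj b c → G.Adj a c → False := by
  intro a b c hab hbc hac
  apply h
  have nab := hab.ne
  have nbc := hbc.ne
  have nac := hac.ne
  have h1 := hab.symm
  have h2 := hbc.symm
  have h3 := hac.symm
  refine ⟨⟨![a, b, c], ?_⟩, ?_⟩
  · intro x y hxy
    fin_cases x <;> fin_cases y <;> simp_all
  · intro x y hxy
    rw [SimpleGraph.top_adj] at hxy
    show G.Adj (![a, b, c] x) (![a, b, c] y)
    fin_cases x <;> fin_cases y <;> simp_all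

lemma bip_count (n k : ℕ) (hk : 1 ≤ k) (hkn : k ≤ n) :
    eCount (bip n (k - 1)) = (k - 1) * (n - k + 1) := by
  set j := k - 1 with hj
  have hjn : j < n := by omega
  have hA : (univ.filter (fun v : Fin n => (v : ℕ) < j)).card = j := by
    have : univ.filter (fun v : Fin n => (v : ℕ) < j) = Finset.Iio (⟨j, hjn⟩ : Fin n) := by
      ext v
      simp [Finset.mem_Iio, Fin.lt_def]
    rw [this, Fin.card_Iio]
  have hdeg : ∀ v : Fin n, (bip n j).degree v =
      if (v : ℕ) < j then n - j else j := by
    intro v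
    rw [degree, neighborFinset_eq_filter]
    split_ifs with hv
    · have : univ.filter ((bip n j).Adj v) =
          univ.filter (fun y : Fin n => ¬ ((y : ℕ) < j)) := by
        ext y
        simp only [Finset.mem_filter, Finset.mem_univ, true_and]
        constructor
        · rintro (⟨-, hy⟩ | ⟨-, hy⟩)
          · exact hy
          · exact absurd hv hy
        · intro hy; exact Or.inl ⟨hv, hy⟩
      rw [this]
      have hcompl := Finset.card_filter_add_card_filter_not
        (s := (univ : Finset (Fin n))) (p := fun v : Fin n => (v : ℕ) < j)
      rw [Finset.card_univ, Fintype.card_fin] at hcompl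
      omega
    · have : univ.filter ((bip n j).Adj v) =
          univ.filter (fun y : Fin n => (y : ℕ) < j) := by
        ext y
        simp only [Finset.mem_filter, Finset.mem_univ, true_and]
        constructor
        · rintro (⟨hy, -⟩ | ⟨hy, -⟩)
          · exact absurd hy hv
          · exact hy
        · intro hy; exact Or.inr ⟨hy, hv⟩
      rw [this, hA]
  have hsum := (bip n j).sum_degrees_eq_twice_card_edges
  have hsum2 : ∑ v : Fin n, (bip n j).degree v = j * (n - j) + (n - j) * j := by
    rw [Finset.sum_congr rfl (fun v _ => hdeg v)]
    rw [Finset.sum_ite, Finset.sum_const, Finset.sum_const]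
    have h2 : (univ.filter (fun v : Fin n => ¬ ((v : ℕ) < j))).card = n - j := by
      have hcompl := Finset.card_filter_add_card_filter_not
        (s := (univ : Finset (Fin n))) (p := fun v : Fin n => (v : ℕ) < j)
      rw [Finset.card_univ, Fintype.card_fin] at hcompl
      omega
    rw [hA, h2, smul_eq_mul, smul_eq_mul]
  have hcc : (n - j) * j = j * (n - j) := Nat.mul_comm _ _
  have hcount : (bip n j).edgeFinset.card = j * (n - j) := by omega
  have : eCount (bip n j) = (bip n j).edgeFinset.card := by
    rw [eCount, ← SimpleGraph.coe_edgeFinset, Set.ncard_coe_finset]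
  rw [this, hcount]
  have : n - j = n - k + 1 := by omega
  rw [this]


/-- Corollary: Turán number of `kP₃` and `K₃`. -/
theorem ex_kP3_and_K3 (k n : ℕ) (hk : 2 ≤ k) (hn : 9 * (k ^ 2 + k + 1) + 6 ≤ n) :
    exNum n (fun G => ¬ GContains G (kPaths k 3) ∧
        ¬ GContains G (⊤ : SimpleGraph (Fin 3))) =
      (k - 1) * (n - k + 1) := by
  classical
  have hk1 : 1 ≤ k := by omega
  have hk2 : k ≤ k ^ 2 := Nat.le_self_pow two_ne_zero k
  have hkn : k ≤ n := by omega
  have hmem : (k - 1) * (n - k + 1) ∈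
      {m | ∃ G : SimpleGraph (Fin n), (¬ GContains G (kPaths k 3) ∧
        ¬ GContains G (⊤ : SimpleGraph (Fin 3))) ∧ eCount G = m} :=
    ⟨bip n (k - 1), ⟨bip_free n k hk1 hkn, not_top_of_tri (bip_tri_free n (k - 1))⟩,
      bip_count n k hk1 hkn⟩
  have hub : ∀ x ∈ {m | ∃ G : SimpleGraph (Fin n), (¬ GContains G (kPaths k 3) ∧
      ¬ GContains G (⊤ : SimpleGraph (Fin 3))) ∧ eCount G = m},
      x ≤ (k - 1) * (n - k + 1) := by
    rintro x ⟨G, ⟨hfree, htop⟩, rfl⟩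
    haveI : DecidableRel G.Adj := Classical.decRel _
    have htri := tri_of_not_top htop
    have hmain := main_bound k hk (Fin n) inferInstance inferInstance G inferInstance
      (by rw [Fintype.card_fin]; exact hn) htri hfree
    rw [Fintype.card_fin] at hmain
    have hcv : eCount G = G.edgeFinset.card := by
      rw [eCount, ← SimpleGraph.coe_edgeFinset, Set.ncard_coe_finset]
    omega
  rw [exNum]
  exact le_antisymm (csSup_le ⟨_, hmem⟩ hub) (le_csSup ⟨_, hub⟩ hmem)
end

section
/- Let k ≥ 2 be an integer and n ≥ 9(k²+k+1). Let G be a kP₃-free graph on n vertices and let A ⊆ V(G) be a set of k−1 vertices each of degree at least n/9 in G. Then the subgraph of G induced on V(G)∖A has maximum degree at most 1. -/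
open SimpleGraph

/-- Lemma 3.1: in a `kP₃`-free graph, after removing `k−1` vertices of degree at
least `n/9`, the induced graph has maximum degree at most 1. -/
theorem kP3_free_max_degree_le_one (k n : ℕ) (hk : 2 ≤ k)
    (hn : 9 * (k ^ 2 + k + 1) ≤ n)
    (G : SimpleGraph (Fin n)) (hfree : ¬ GContains G (kPaths k 3))
    (A : Finset (Fin n)) (hA : A.card = k - 1)
    (hdeg : ∀ v ∈ A, (n : ℚ) / 9 ≤ ((G.neighborSet v).ncard : ℚ)) :
    ∀ v : Fin n, v ∉ A → (G.neighborSet v \ ↑A).ncard ≤ 1 := by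
  classical
  intro v hv
  by_contra hcon
  push_neg at hcon
  obtain ⟨x, y, hx, hy, hxy⟩ := (Set.one_lt_ncard_iff (Set.toFinite _)).mp hcon
  obtain ⟨hxadj, hxA⟩ := hx
  obtain ⟨hyadj, hyA⟩ := hy
  have hxA' : x ∉ A := by simpa using hxA
  have hyA' : y ∉ A := by simpa using hyA
  obtain ⟨K, rfl⟩ : ∃ K, k = K + 1 := ⟨k - 1, by omega⟩
  have hA' : A.card = K := by omega
  -- degree lower bound for vertices of A
  have hdegA : ∀ a ∈ A, K ^ 2 + 3 * K + 3 ≤ (G.neighborFinset a).card := by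
    intro a ha
    have h1 := hdeg a ha
    have h2 : ((K ^ 2 + 3 * K + 3 : ℕ) : ℚ) ≤ (n : ℚ) / 9 := by
      rw [le_div_iff₀ (by norm_num)]
      have h3 : ((9 * ((K + 1) ^ 2 + (K + 1) + 1) : ℕ) : ℚ) ≤ (n : ℚ) := by exact_mod_cast hn
      push_cast at h3 ⊢
      nlinarith [h3]
    have h4 : K ^ 2 + 3 * K + 3 ≤ (G.neighborSet a).ncard := by exact_mod_cast h2.trans h1
    rwa [Set.ncard_eq_toFinset_card'] at h4
  -- enumerate A
  set aa : Fin K → Fin n := fun i => (A.orderIsoOfFin hA' i : Fin n) with haa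
  have haaA : ∀ i, aa i ∈ A := fun i => (A.orderIsoOfFin hA' i).2
  have haainj : Function.Injective aa := fun i j h =>
    (A.orderIsoOfFin hA').injective (Subtype.ext h)
  -- the forbidden base set
  set T : Finset (Fin n) := insert v (insert x (insert y A)) with hT
  have hTcard : T.card ≤ K + 3 := by
    have t1 := Finset.card_insert_le x (insert y A)
    have t2 := Finset.card_insert_le y A
    have t3 := Finset.card_insert_le v (insert x (insert y A))
    rw [hT]
    omega
  have hmemT : ∀ z : Fin n, z ∈ T ↔ z = v ∨ z = x ∨ z = y ∨ z ∈ A := by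
    intro z; simp [hT]
  -- greedy construction of pairwise-disjoint leaf pairs
  have key : ∀ m : ℕ, (hm : m ≤ K) → ∃ f : Fin m → Finset (Fin n),
      (∀ i : Fin m, (f i).card = 2 ∧ f i ⊆ G.neighborFinset (aa (Fin.castLE hm i)) ∧
        Disjoint (f i) T) ∧
      ∀ i j : Fin m, i ≠ j → Disjoint (f i) (f j) := by
    intro m
    induction m with
    | zero => exact fun _ => ⟨Fin.elim0, fun i => i.elim0, fun i => i.elim0⟩
    | succ m ih =>
      intro hm
      obtain ⟨f, hf1, hf2⟩ := ih (by omega)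
      classical
      set B : Finset (Fin n) := T ∪ Finset.univ.biUnion f with hB
      have hfB : ∀ j : Fin m, f j ⊆ B := fun j =>
        (Finset.subset_biUnion_of_mem f (Finset.mem_univ j)).trans Finset.subset_union_right
      have hTB : T ⊆ B := Finset.subset_union_left
      have hBcard : B.card ≤ 3 * K + 1 := by
        have h1 : (Finset.univ.biUnion f).card ≤ 2 * m := by
          calc (Finset.univ.biUnion f).card ≤ ∑ i, (f i).card := Finset.card_biUnion_le
            _ = ∑ _i : Fin m, 2 := by
                apply Finset.sum_congr rfl; intro i _; exact (hf1 i).1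
            _ = 2 * m := by simp [mul_comm]
        have h2 := Finset.card_union_le T (Finset.univ.biUnion f)
        rw [hB]
        omega
      have ham := hdegA (aa ⟨m, hm⟩) (haaA _)
      have hsd : 2 ≤ ((G.neighborFinset (aa ⟨m, hm⟩)) \ B).card := by
        have h5 := Finset.le_card_sdiff B (G.neighborFinset (aa ⟨m, hm⟩))
        obtain ⟨q, hq⟩ : ∃ q, K ^ 2 = q := ⟨_, rfl⟩
        rw [hq] at ham
        omega
      obtain ⟨S, hS, hScard⟩ := Finset.exists_subset_card_eq hsd
      have hSnb : ∀ z ∈ S, z ∉ B := fun z hz => (Finset.mem_sdiff.mp (hS hz)).2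
      have hcases : ∀ i : Fin (m + 1), i = Fin.last m ∨ ∃ i' : Fin m, i = i'.castSucc :=
        fun i => Fin.lastCases (Or.inl rfl) (fun i' => Or.inr ⟨i', rfl⟩) i
      refine ⟨Fin.snoc f S, ?_, ?_⟩
      · intro i
        rcases hcases i with rfl | ⟨i', rfl⟩
        · rw [Fin.snoc_last]
          refine ⟨hScard, ?_, ?_⟩
          · intro z hz
            exact (Finset.mem_sdiff.mp (hS hz)).1
          · exact Finset.disjoint_left.mpr fun z hz hzT => hSnb z hz (hTB hzT)
        · rw [Fin.snoc_castSucc]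
          exact hf1 i'
      · intro i j hij
        rcases hcases i with rfl | ⟨i', rfl⟩ <;> rcases hcases j with rfl | ⟨j', rfl⟩
        · exact absurd rfl hij
        · rw [Fin.snoc_last, Fin.snoc_castSucc]
          exact Finset.disjoint_left.mpr fun z hz hzf => hSnb z hz (hfB j' hzf)
        · rw [Fin.snoc_last, Fin.snoc_castSucc]
          exact (Finset.disjoint_left.mpr fun z hz hzf => hSnb z hz (hfB i' hzf)).symm
        · rw [Fin.snoc_castSucc, Fin.snoc_castSucc]
          exact hf2 i' j' fun h => hij (by rw [h])
  obtain ⟨f, hf1, hf2⟩ := key K le_rfl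
  have hfne : ∀ i, (f i).Nonempty := fun i =>
    Finset.card_pos.mp (by rw [(hf1 i).1]; norm_num)
  have hcard1 : ∀ i, 1 < (f i).card := fun i => by rw [(hf1 i).1]; norm_num
  -- the three vertex functions
  set c : Fin (K + 1) → Fin n := Fin.cons v aa with hc
  set l1 : Fin (K + 1) → Fin n := Fin.cons x (fun i => (f i).min' (hfne i)) with hl1
  set l2 : Fin (K + 1) → Fin n := Fin.cons y (fun i => (f i).max' (hfne i)) with hl2
  have hcases : ∀ i : Fin (K + 1), i = 0 ∨ ∃ i' : Fin K, i = i'.succ :=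
    fun i => Fin.cases (Or.inl rfl) (fun i' => Or.inr ⟨i', rfl⟩) i
  have hl1mem : ∀ i : Fin K, l1 i.succ ∈ f i := fun i => by
    rw [hl1]; simp only [Fin.cons_succ]; exact Finset.min'_mem _ _
  have hl2mem : ∀ i : Fin K, l2 i.succ ∈ f i := fun i => by
    rw [hl2]; simp only [Fin.cons_succ]; exact Finset.max'_mem _ _
  have hfT : ∀ i : Fin K, ∀ z ∈ f i, z ∉ T := fun i z hz =>
    Finset.disjoint_left.mp (hf1 i).2.2 hz
  have hxT : x ∈ T := by rw [hmemT]; tauto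
  have hyT : y ∈ T := by rw [hmemT]; tauto
  have hvT : v ∈ T := by rw [hmemT]; tauto
  have hAT : ∀ z ∈ A, z ∈ T := fun z hz => by rw [hmemT]; tauto
  have hxv : x ≠ v := fun h => G.loopless.irrefl v (h ▸ hxadj)
  have hyv : y ≠ v := fun h => G.loopless.irrefl v (h ▸ hyadj)
  -- leaves never equal centers
  have hlc : ∀ i j : Fin (K + 1), l1 i ≠ c j ∧ l2 i ≠ c j := by
    intro i j
    have hcj : c j = v ∨ c j ∈ A := by
      rcases hcases j with rfl | ⟨j', rfl⟩
      · left; rw [hc]; simp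
      · right; rw [hc]; simpa using haaA j'
    have hcjT : c j ∈ T := by
      rcases hcj with h | h
      · rw [h]; exact hvT
      · exact hAT _ h
    rcases hcases i with rfl | ⟨i', rfl⟩
    · have hx0 : l1 (0 : Fin (K + 1)) = x := by rw [hl1]; simp
      have hy0 : l2 (0 : Fin (K + 1)) = y := by rw [hl2]; simp
      rw [hx0, hy0]
      rcases hcj with h | h
      · rw [h]; exact ⟨hxv, hyv⟩
      · exact ⟨fun hh => hxA' (by rwa [← hh] at h), fun hh => hyA' (by rwa [← hh] at h)⟩
    · constructor <;> intro hh
      · exact hfT i' _ (hh ▸ hl1mem i') hcjT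
      · exact hfT i' _ (hh ▸ hl2mem i') hcjT
  have hne12 : ∀ i, l1 i ≠ l2 i := by
    intro i
    rcases hcases i with rfl | ⟨i', rfl⟩
    · have hx0 : l1 (0 : Fin (K + 1)) = x := by rw [hl1]; simp
      have hy0 : l2 (0 : Fin (K + 1)) = y := by rw [hl2]; simp
      rw [hx0, hy0]; exact hxy
    · have := Finset.min'_lt_max'_of_card (f i') (hcard1 i')
      rw [hl1, hl2]; simp only [Fin.cons_succ]
      exact ne_of_lt this
  -- leaves of different paths are distinct
  have hll : ∀ i j : Fin (K + 1), i ≠ j → ∀ z w : Fin n,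
      (z = l1 i ∨ z = l2 i) → (w = l1 j ∨ w = l2 j) → z ≠ w := by
    have hmem : ∀ (i : Fin (K + 1)) (z : Fin n), (z = l1 i ∨ z = l2 i) →
        (i = 0 ∧ (z = x ∨ z = y)) ∨ ∃ i' : Fin K, i = i'.succ ∧ z ∈ f i' := by
      intro i z hz
      rcases hcases i with rfl | ⟨i', rfl⟩
      · left
        refine ⟨rfl, ?_⟩
        have hx0 : l1 (0 : Fin (K + 1)) = x := by rw [hl1]; simp
        have hy0 : l2 (0 : Fin (K + 1)) = y := by rw [hl2]; simp
        rcases hz with rfl | rfl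
        · left; exact hx0
        · right; exact hy0
      · right
        exact ⟨i', rfl, by rcases hz with rfl | rfl; exacts [hl1mem i', hl2mem i']⟩
    intro i j hij z w hz hw
    rcases hmem i z hz with ⟨rfl, hzxy⟩ | ⟨i', rfl, hzf⟩ <;>
      rcases hmem j w hw with ⟨rfl, hwxy⟩ | ⟨j', rfl, hwf⟩
    · exact absurd rfl hij
    · intro h
      subst h
      rcases hzxy with rfl | rfl
      · exact hfT j' _ hwf hxT
      · exact hfT j' _ hwf hyT
    · intro h
      subst h
      rcases hwxy with rfl | rfl
      · exact hfT i' _ hzf hxT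
      · exact hfT i' _ hzf hyT
    · have hij' : i' ≠ j' := fun h => hij (by rw [h])
      intro h
      subst h
      exact Finset.disjoint_left.mp (hf2 i' j' hij') hzf hwf
  have hcinj : Function.Injective c := by
    intro i j h
    rcases hcases i with rfl | ⟨i', rfl⟩ <;> rcases hcases j with rfl | ⟨j', rfl⟩
    · rfl
    · exfalso
      rw [hc] at h
      simp only [Fin.cons_zero, Fin.cons_succ] at h
      exact hv (h ▸ haaA j')
    · exfalso
      rw [hc] at h
      simp only [Fin.cons_zero, Fin.cons_succ] at h
      exact hv (h ▸ haaA i')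
    · rw [hc] at h
      simp only [Fin.cons_succ] at h
      rw [haainj h]
  have hadj1 : ∀ i, G.Adj (c i) (l1 i) := by
    intro i
    rcases hcases i with rfl | ⟨i', rfl⟩
    · rw [hc, hl1]; simpa using hxadj
    · rw [hc, hl1]; simp only [Fin.cons_succ]
      exact (SimpleGraph.mem_neighborFinset _ _ _).mp ((hf1 i').2.1 (Finset.min'_mem _ _))
  have hadj2 : ∀ i, G.Adj (c i) (l2 i) := by
    intro i
    rcases hcases i with rfl | ⟨i', rfl⟩
    · rw [hc, hl2]; simpa using hyadj
    · rw [hc, hl2]; simp only [Fin.cons_succ]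
      exact (SimpleGraph.mem_neighborFinset _ _ _).mp ((hf1 i').2.1 (Finset.max'_mem _ _))
  -- assemble the embedding
  set g : Fin (K + 1) × Fin 3 → Fin n := fun p =>
    if (p.2 : ℕ) = 0 then l1 p.1 else if (p.2 : ℕ) = 1 then c p.1 else l2 p.1 with hg
  have hginj : Function.Injective g := by
    rintro ⟨i, p⟩ ⟨j, q⟩ h
    fin_cases p <;> fin_cases q
    · rcases eq_or_ne i j with rfl | hij
      · rfl
      · exact absurd h (hll i j hij _ _ (Or.inl rfl) (Or.inl rfl))
    · exact absurd h (hlc i j).1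
    · rcases eq_or_ne i j with rfl | hij
      · exact absurd h (hne12 i)
      · exact absurd h (hll i j hij _ _ (Or.inl rfl) (Or.inr rfl))
    · exact absurd h (Ne.symm (hlc j i).1)
    · rcases eq_or_ne i j with rfl | hij
      · rfl
      · exact absurd (hcinj h) hij
    · exact absurd h (hlc j i).2.symm
    · rcases eq_or_ne i j with rfl | hij
      · exact absurd h (hne12 i).symm
      · exact absurd h (hll i j hij _ _ (Or.inr rfl) (Or.inl rfl))
    · exact absurd h (hlc i j).2
    · rcases eq_or_ne i j with rfl | hij
      · rfl
      · exact absurd h (hll i j hij _ _ (Or.inr rfl) (Or.inr rfl))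
  apply hfree
  refine ⟨⟨g, hginj⟩, ?_⟩
  rintro ⟨i, p⟩ ⟨j, q⟩ (⟨rfl, hpq⟩ : i = j ∧ _)
  show G.Adj (g (i, p)) (g (i, q))
  fin_cases p <;> fin_cases q
  · exact absurd hpq (by simp)
  · exact (hadj1 i).symm
  · exact absurd hpq (by simp)
  · exact hadj1 i
  · exact absurd hpq (by simp)
  · exact hadj2 i
  · exact absurd hpq (by simp)
  · exact (hadj2 i).symm
  · exact absurd hpq (by simp)
end
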